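/- Let ℓ and m be positive even integers and a, b, x, μ real numbers. Let D be the ℓ×ℓ diagonal matrix with entries x + 2ι a cos(kπ/(ℓ+1)) for k = 1, …, ℓ; let J' be the ℓ×ℓ matrix whose (p, ℓ+1-p) entries are ι^{ℓ-1} (-1)^{ℓ-p} and whose other entries are 0; and let B be the m×m matrix with diagonal entries 2ι b cos(sπ/(m+1)) and anti-diagonal entries B_{s,m+1-s} = (-1)^{m-s} ι^m μ, zeros elsewhere. Then det( I_m ⊗ D + B ⊗ J' ) = ∏_{s=1}^{m/2} ∏_{k=1}^{ℓ/2} ( x^2 + 4a^2 cos^2(kπ/(ℓ+1)) + 4b^2 cos^2(sπ/(m+1)) + μ^2 )^2. -/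

import Mathlib

open scoped Kronecker

/-- The `m × m` matrix `B` with diagonal entries `B_{s,s} = 2 ι b cos(sπ/(m+1))`,
anti-diagonal entries `B_{s,m+1-s} = (-1)^{m-s} ι^m μ` (1-based indexing) and zeros
elsewhere. -/
noncomputable def Bmat (m : ℕ) (b μ : ℝ) : Matrix (Fin m) (Fin m) ℂ :=
  Matrix.of fun i j =>
    if i = j then
      2 * Complex.I * (b : ℂ) *
        ((Real.cos (((i : ℕ) + 1) * Real.pi / ((m : ℝ) + 1)) : ℝ) : ℂ)
    else if (i : ℕ) + (j : ℕ) + 1 = m then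
      (-1) ^ (m - 1 - (i : ℕ)) * Complex.I ^ m * (μ : ℂ)
    else 0

/-- The `ℓ × ℓ` diagonal matrix `D` with entries `x + 2 ι a cos(kπ/(ℓ+1))`, `k = 1, …, ℓ`. -/
noncomputable def Dmat (l : ℕ) (a x : ℝ) : Matrix (Fin l) (Fin l) ℂ :=
  Matrix.diagonal fun k =>
    (x : ℂ) + 2 * Complex.I * (a : ℂ) *
      ((Real.cos (((k : ℕ) + 1) * Real.pi / ((l : ℝ) + 1)) : ℝ) : ℂ)

/-- The `ℓ × ℓ` anti-diagonal matrix `J'` whose `(p, ℓ+1-p)` entry is `ι^{ℓ-1} (-1)^{ℓ-p}`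
(1-based indexing), with zeros elsewhere. -/
noncomputable def Jprime (l : ℕ) : Matrix (Fin l) (Fin l) ℂ :=
  Matrix.of fun p q =>
    if (p : ℕ) + (q : ℕ) + 1 = l then
      Complex.I ^ (l - 1) * (-1) ^ (l - 1 - (p : ℕ))
    else 0

namespace DetBlockAux

noncomputable def cc (n k : ℕ) : ℝ := Real.cos ((k : ℝ) * Real.pi / ((n : ℝ) + 1))

lemma cc_flip {n k : ℕ} (h1 : 1 ≤ k) (h2 : k ≤ n) : cc n (n + 1 - k) = - cc n k := by
  unfold cc
  have hcast : ((n + 1 - k : ℕ) : ℝ) = (n : ℝ) + 1 - (k : ℝ) := by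
    have : k ≤ n + 1 := by omega
    push_cast [Nat.cast_sub this]
    ring
  rw [hcast]
  have hne : ((n : ℝ) + 1) ≠ 0 := by positivity
  have harg : ((n : ℝ) + 1 - (k : ℝ)) * Real.pi / ((n : ℝ) + 1)
      = Real.pi - (k : ℝ) * Real.pi / ((n : ℝ) + 1) := by
    field_simp
  rw [harg, Real.cos_pi_sub]

noncomputable def anti (n : ℕ) (v : ℕ → ℂ) : Matrix (Fin n) (Fin n) ℂ :=
  Matrix.of fun p q => if (p : ℕ) + (q : ℕ) + 1 = n then v p else 0

lemma anti_mul_anti (n : ℕ) (v w : ℕ → ℂ) :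
    anti n v * anti n w = Matrix.diagonal (fun p : Fin n => v p * w (n - 1 - (p : ℕ))) := by
  ext p q
  rw [Matrix.mul_apply]
  rw [Finset.sum_eq_single p.rev]
  · have hp : ((p.rev : ℕ)) = n - ((p : ℕ) + 1) := Fin.val_rev p
    have hplt := p.isLt
    have hqlt := q.isLt
    by_cases h : q = p
    · subst h
      simp only [anti, Matrix.of_apply, Matrix.diagonal_apply_eq]
      rw [if_pos (by omega), if_pos (by omega)]
      congr 2
      omega
    · rw [Matrix.diagonal_apply_ne' _ h]
      simp only [anti, Matrix.of_apply]
      rw [if_pos (by omega)]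
      rw [if_neg (by
        intro hc
        apply h
        apply Fin.ext
        omega)]
      ring
  · intro r _ hr
    simp only [anti, Matrix.of_apply]
    rw [if_neg (by
      intro hc
      apply hr
      apply Fin.ext
      have := p.isLt
      have := r.isLt
      rw [Fin.val_rev]
      omega)]
    ring
  · intro h
    exact absurd (Finset.mem_univ _) h

lemma anti_mul_diag_eq {n : ℕ} (d d' : Fin n → ℂ) (v : ℕ → ℂ)
    (h : ∀ p q : Fin n, (p : ℕ) + (q : ℕ) + 1 = n → d' q = d p) :
    anti n v * Matrix.diagonal d' = Matrix.diagonal d * anti n v := by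
  ext p q
  rw [Matrix.mul_diagonal, Matrix.diagonal_mul]
  simp only [anti, Matrix.of_apply]
  split_ifs with hc
  · rw [h p q hc]; ring
  · ring

end DetBlockAux



namespace DetBlockAux

noncomputable def dD (l : ℕ) (a x : ℝ) : Fin l → ℂ :=
  fun p => (x : ℂ) + 2 * Complex.I * (a : ℂ) * ((cc l ((p : ℕ) + 1) : ℝ) : ℂ)

lemma Dmat_eq (l : ℕ) (a x : ℝ) : Dmat l a x = Matrix.diagonal (dD l a x) := by
  unfold Dmat dD cc
  congr 1
  funext p
  norm_num

noncomputable def jv (l : ℕ) : ℕ → ℂ :=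
  fun p => Complex.I ^ (l - 1) * (-1) ^ (l - 1 - p)

lemma Jprime_eq (l : ℕ) : Jprime l = anti l (jv l) := rfl

noncomputable def dB (m : ℕ) (b : ℝ) : Fin m → ℂ :=
  fun s => 2 * Complex.I * (b : ℂ) * ((cc m ((s : ℕ) + 1) : ℝ) : ℂ)

noncomputable def av (m : ℕ) (μ : ℝ) : ℕ → ℂ :=
  fun s => (-1) ^ (m - 1 - s) * Complex.I ^ m * (μ : ℂ)

lemma Bmat_eq (m : ℕ) (hm : Even m) (b μ : ℝ) :
    Bmat m b μ = Matrix.diagonal (dB m b) + anti m (av m μ) := by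
  ext i j
  simp only [Bmat, Matrix.of_apply, Matrix.add_apply, anti]
  by_cases h : i = j
  · subst h
    rw [if_pos rfl, Matrix.diagonal_apply_eq]
    rw [if_neg (by
      intro hc
      obtain ⟨r, hr⟩ := hm
      omega)]
    unfold dB cc
    norm_num
  · rw [if_neg h, Matrix.diagonal_apply_ne _ h]
    unfold av
    rw [zero_add]

end DetBlockAux

namespace DetBlockAux
lemma Jprime_mul_Jprime (l : ℕ) : Jprime l * Jprime l = 1 := by
  rw [Jprime_eq, anti_mul_anti]
  rw [show (fun p : Fin l => jv l (p : ℕ) * jv l (l - 1 - (p : ℕ)))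
      = (fun _ : Fin l => (1 : ℂ)) from funext fun p => by
    have hp := p.isLt
    unfold jv
    have h1 : l - 1 - (l - 1 - (p : ℕ)) = (p : ℕ) := by omega
    rw [h1]
    have h2 : (Complex.I ^ (l-1) * (-1) ^ (l - 1 - (p:ℕ))) * (Complex.I ^ (l-1) * (-1) ^ (p:ℕ))
        = (Complex.I * Complex.I) ^ (l-1) * ((-1) ^ (l - 1 - (p:ℕ)) * (-1) ^ (p:ℕ)) := by
      rw [mul_pow]; ring
    rw [h2, ← pow_add, (by omega : l - 1 - (p:ℕ) + (p:ℕ) = l - 1), Complex.I_mul_I, ← mul_pow]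
    norm_num]
  exact Matrix.diagonal_one

lemma Jprime_mul_Dmat (l : ℕ) (a x : ℝ) :
    Jprime l * Dmat l (-a) x = Dmat l a x * Jprime l := by
  rw [Jprime_eq, Dmat_eq, Dmat_eq]
  apply anti_mul_diag_eq
  intro p q hpq
  unfold dD
  have hflip : cc l ((q : ℕ) + 1) = - cc l ((p : ℕ) + 1) := by
    have h1 : (q : ℕ) + 1 = l + 1 - ((p : ℕ) + 1) := by omega
    rw [h1, cc_flip (by omega) (by have := p.isLt; omega)]
  rw [hflip]
  push_cast
  ring

lemma Bmat_mul_Bmat (m : ℕ) (hm : Even m) (hm0 : 0 < m) (b μ : ℝ) :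
    Bmat m b μ * Bmat m b μ
      = Matrix.diagonal (fun s : Fin m =>
          -(4 : ℂ) * (b:ℂ)^2 * ((cc m ((s:ℕ)+1) : ℝ) : ℂ)^2 - (μ:ℂ)^2) := by
  rw [Bmat_eq m hm]
  rw [add_mul, mul_add, mul_add]
  have hanti : anti m (av m μ) * anti m (av m μ)
      = Matrix.diagonal (fun _ : Fin m => -(μ:ℂ)^2) := by
    rw [anti_mul_anti]
    rw [show (fun s : Fin m => av m μ (s : ℕ) * av m μ (m - 1 - (s : ℕ)))
        = (fun _ : Fin m => -(μ:ℂ)^2) from funext fun s => by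
      have hs := s.isLt
      unfold av
      have h1 : m - 1 - (m - 1 - (s : ℕ)) = (s : ℕ) := by omega
      rw [h1]
      have h2 : ((-1:ℂ) ^ (m - 1 - (s:ℕ)) * Complex.I ^ m * μ) * ((-1) ^ (s:ℕ) * Complex.I ^ m * μ)
          = ((-1:ℂ) ^ (m - 1 - (s:ℕ)) * (-1) ^ (s:ℕ)) * ((Complex.I * Complex.I) ^ m) * (μ:ℂ)^2 := by
        rw [mul_pow]; ring
      rw [h2, ← pow_add, (by omega : m - 1 - (s:ℕ) + (s:ℕ) = m - 1), Complex.I_mul_I]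
      rw [Odd.neg_one_pow (Nat.Even.sub_odd (by omega) hm odd_one), Even.neg_one_pow hm]
      ring]
  have hcross : anti m (av m μ) * Matrix.diagonal (dB m b)
      = Matrix.diagonal (fun s => - dB m b s) * anti m (av m μ) := by
    apply anti_mul_diag_eq
    intro p q hpq
    unfold dB
    have hflip : cc m ((q : ℕ) + 1) = - cc m ((p : ℕ) + 1) := by
      have h1 : (q : ℕ) + 1 = m + 1 - ((p : ℕ) + 1) := by omega
      rw [h1, cc_flip (by omega) (by have := p.isLt; omega)]
    rw [hflip]
    push_cast
    ring
  rw [hanti, hcross, Matrix.diagonal_mul_diagonal]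
  have hzero : Matrix.diagonal (dB m b) * anti m (av m μ)
      + Matrix.diagonal (fun s => - dB m b s) * anti m (av m μ) = 0 := by
    rw [← add_mul]
    have : Matrix.diagonal (dB m b) + Matrix.diagonal (fun s => - dB m b s)
        = (0 : Matrix (Fin m) (Fin m) ℂ) := by
      ext i j
      by_cases h : i = j
      · subst h; simp
      · simp [Matrix.diagonal_apply_ne _ h]
    rw [this, Matrix.zero_mul]
  have hre : (Matrix.diagonal fun i => dB m b i * dB m b i) + Matrix.diagonal (dB m b) * anti m (av m μ)
      + ((Matrix.diagonal fun s => - dB m b s) * anti m (av m μ)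
        + Matrix.diagonal (fun _ : Fin m => -(μ:ℂ)^2))
      = (Matrix.diagonal (dB m b) * anti m (av m μ)
          + (Matrix.diagonal fun s => - dB m b s) * anti m (av m μ))
        + ((Matrix.diagonal fun i => dB m b i * dB m b i)
          + Matrix.diagonal (fun _ : Fin m => -(μ:ℂ)^2)) := by abel
  rw [hre, hzero, zero_add]
  ext i j
  by_cases h : i = j
  · subst h
    simp only [Matrix.add_apply, Matrix.diagonal_apply_eq]
    unfold dB
    rw [show (2*Complex.I*(b:ℂ)*((cc m ((i:ℕ)+1) : ℝ):ℂ)) * (2*Complex.I*(b:ℂ)*((cc m ((i:ℕ)+1) : ℝ):ℂ))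
        = (Complex.I*Complex.I) * (4*(b:ℂ)^2*((cc m ((i:ℕ)+1) : ℝ):ℂ)^2) from by ring, Complex.I_mul_I]
    ring
  · simp [Matrix.diagonal_apply_ne _ h]

end DetBlockAux

namespace DetBlockAux

noncomputable def Wv (l m : ℕ) (a b x μ : ℝ) (s k : ℕ) : ℝ :=
  x ^ 2 + 4 * a ^ 2 * (cc l k) ^ 2 + 4 * b ^ 2 * (cc m s) ^ 2 + μ ^ 2

noncomputable def Mmat (l m : ℕ) (a b x μ : ℝ) : Matrix (Fin m × Fin l) (Fin m × Fin l) ℂ :=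
  (1 : Matrix (Fin m) (Fin m) ℂ) ⊗ₖ Dmat l a x + Bmat m b μ ⊗ₖ Jprime l

noncomputable def Nmat (l m : ℕ) (a b x μ : ℝ) : Matrix (Fin m × Fin l) (Fin m × Fin l) ℂ :=
  (1 : Matrix (Fin m) (Fin m) ℂ) ⊗ₖ Dmat l (-a) x - Bmat m b μ ⊗ₖ Jprime l

lemma Mmat_mul_Nmat (l m : ℕ) (hm : Even m) (hm0 : 0 < m) (a b x μ : ℝ) :
    Mmat l m a b x μ * Nmat l m a b x μ
      = Matrix.diagonal (fun sp : Fin m × Fin l =>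
          ((Wv l m a b x μ ((sp.1 : ℕ) + 1) ((sp.2 : ℕ) + 1) : ℝ) : ℂ)) := by
  unfold Mmat Nmat
  rw [mul_sub, add_mul, add_mul]
  rw [← Matrix.mul_kronecker_mul, ← Matrix.mul_kronecker_mul, ← Matrix.mul_kronecker_mul,
    ← Matrix.mul_kronecker_mul]
  simp only [Matrix.one_mul, Matrix.mul_one]
  rw [Jprime_mul_Dmat, Jprime_mul_Jprime, Bmat_mul_Bmat m hm hm0]
  have key : ∀ P Q R : Matrix (Fin m × Fin l) (Fin m × Fin l) ℂ, P + Q - (Q + R) = P - R := by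
    intro P Q R; abel
  rw [key]
  rw [Dmat_eq, Dmat_eq, Matrix.diagonal_mul_diagonal]
  rw [show (1 : Matrix (Fin m) (Fin m) ℂ) = Matrix.diagonal (fun _ : Fin m => (1:ℂ)) from
    Matrix.diagonal_one.symm]
  rw [show (1 : Matrix (Fin l) (Fin l) ℂ) = Matrix.diagonal (fun _ : Fin l => (1:ℂ)) from
    Matrix.diagonal_one.symm]
  rw [Matrix.diagonal_kronecker_diagonal, Matrix.diagonal_kronecker_diagonal]
  ext i j
  by_cases h : i = j
  · subst h
    simp only [Matrix.sub_apply, Matrix.diagonal_apply_eq]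
    unfold dD Wv
    push_cast
    linear_combination (-(4:ℂ) * (a:ℂ)^2 * ((cc l ((i.2:ℕ)+1) : ℝ):ℂ)^2) * Complex.I_sq
  · simp [Matrix.diagonal_apply_ne _ h]

lemma Dmat_rev (l : ℕ) (a x : ℝ) (p q : Fin l) :
    Dmat l a x p.rev q.rev = Dmat l (-a) x p q := by
  rw [Dmat_eq, Dmat_eq]
  by_cases h : p = q
  · subst h
    rw [Matrix.diagonal_apply_eq, Matrix.diagonal_apply_eq]
    unfold dD
    have hp := p.isLt
    have h1 : ((p.rev : ℕ)) + 1 = l + 1 - ((p : ℕ) + 1) := by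
      rw [Fin.val_rev]; omega
    rw [h1, cc_flip (by omega) (by omega)]
    push_cast
    ring
  · rw [Matrix.diagonal_apply_ne _ (fun hc => h (Fin.rev_inj.mp hc)), Matrix.diagonal_apply_ne _ h]

lemma Jprime_rev (l : ℕ) (hl : Even l) (p q : Fin l) :
    Jprime l p.rev q.rev = - Jprime l p q := by
  have hp := p.isLt
  have hq := q.isLt
  have hrp : ((p.rev : ℕ)) = l - 1 - (p : ℕ) := by rw [Fin.val_rev]; omega
  have hrq : ((q.rev : ℕ)) = l - 1 - (q : ℕ) := by rw [Fin.val_rev]; omega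
  simp only [Jprime, Matrix.of_apply, hrp, hrq]
  by_cases hc : (p : ℕ) + (q : ℕ) + 1 = l
  · rw [if_pos (by omega), if_pos hc]
    have h1 : l - 1 - (l - 1 - (p : ℕ)) = (p : ℕ) := by omega
    rw [h1]
    have hodd : Odd (l - 1) := Nat.Even.sub_odd (by omega) hl odd_one
    have hprod : ((-1:ℂ)) ^ (l - 1 - (p:ℕ)) * (-1) ^ (p:ℕ) = -1 := by
      rw [← pow_add, (by omega : l - 1 - (p:ℕ) + (p:ℕ) = l - 1)]
      exact Odd.neg_one_pow hodd
    have hneg : ((-1:ℂ)) ^ (p:ℕ) = -((-1) ^ (l - 1 - (p:ℕ))) := by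
      calc ((-1:ℂ)) ^ (p:ℕ)
          = (((-1:ℂ)) ^ (l-1-(p:ℕ)) * ((-1)) ^ (l-1-(p:ℕ))) * (-1) ^ (p:ℕ) := by
            rw [← mul_pow]; norm_num
        _ = ((-1:ℂ)) ^ (l-1-(p:ℕ)) * (((-1)) ^ (l-1-(p:ℕ)) * (-1) ^ (p:ℕ)) := by ring
        _ = ((-1:ℂ)) ^ (l-1-(p:ℕ)) * (-1) := by rw [hprod]
        _ = -((-1:ℂ) ^ (l - 1 - (p:ℕ))) := by ring
    rw [hneg]
    ring
  · rw [if_neg (by omega), if_neg hc, neg_zero]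

lemma Nmat_eq_submatrix (l m : ℕ) (hl : Even l) (a b x μ : ℝ) :
    Nmat l m a b x μ
      = (Mmat l m a b x μ).submatrix
          (fun sp : Fin m × Fin l => (sp.1, sp.2.rev))
          (fun sp : Fin m × Fin l => (sp.1, sp.2.rev)) := by
  ext i j
  obtain ⟨s, p⟩ := i
  obtain ⟨t, q⟩ := j
  simp only [Nmat, Mmat, Matrix.submatrix_apply, Matrix.add_apply, Matrix.sub_apply,
    Matrix.kroneckerMap_apply]
  rw [Dmat_rev, Jprime_rev l hl]
  ring

lemma det_Nmat (l m : ℕ) (hl : Even l) (a b x μ : ℝ) :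
    (Nmat l m a b x μ).det = (Mmat l m a b x μ).det := by
  rw [Nmat_eq_submatrix l m hl]
  exact Matrix.det_submatrix_equiv_self
    ((Equiv.refl (Fin m)).prodCongr (Fin.revPerm)) _

lemma det_sq (l m : ℕ) (hl : Even l) (hm : Even m) (hm0 : 0 < m) (a b x μ : ℝ) :
    (Mmat l m a b x μ).det ^ 2
      = ∏ sp : Fin m × Fin l,
          ((Wv l m a b x μ ((sp.1 : ℕ) + 1) ((sp.2 : ℕ) + 1) : ℝ) : ℂ) := by
  rw [sq]
  nth_rewrite 2 [← det_Nmat l m hl a b x μ]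
  rw [← Matrix.det_mul, Mmat_mul_Nmat l m hm hm0, Matrix.det_diagonal]

lemma prod_pair (n : ℕ) (hn : Even n) (g : ℕ → ℂ)
    (hg : ∀ k, 1 ≤ k → k ≤ n → g (n + 1 - k) = g k) :
    ∏ i : Fin n, g ((i : ℕ) + 1) = (∏ k ∈ Finset.Icc 1 (n / 2), g k) ^ 2 := by
  have h1 : ∏ i : Fin n, g ((i : ℕ) + 1) = ∏ i ∈ Finset.range n, g (i + 1) :=
    Fin.prod_univ_eq_prod_range (fun i => g (i + 1)) n
  have h2 : ∏ i ∈ Finset.range n, g (i + 1) = ∏ k ∈ Finset.Icc 1 n, g k := by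
    have : Finset.Icc 1 n = Finset.Ico 1 (n + 1) := by
      ext k; simp only [Finset.mem_Icc, Finset.mem_Ico]; omega
    rw [this, Finset.prod_Ico_eq_prod_range]
    simp [add_comm]
  have hsplit : Finset.Icc 1 n = Finset.Icc 1 (n / 2) ∪ Finset.Icc (n / 2 + 1) n := by
    ext k
    simp only [Finset.mem_Icc, Finset.mem_union]
    omega
  have hdisj : Disjoint (Finset.Icc 1 (n / 2)) (Finset.Icc (n / 2 + 1) n) := by
    rw [Finset.disjoint_left]
    intro k hk hk'
    simp only [Finset.mem_Icc] at hk hk'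
    omega
  have h3 : ∏ k ∈ Finset.Icc (n / 2 + 1) n, g k = ∏ k ∈ Finset.Icc 1 (n / 2), g k := by
    apply Finset.prod_nbij' (fun k => n + 1 - k) (fun k => n + 1 - k)
    · intro k hk
      simp only [Finset.mem_Icc] at hk ⊢
      obtain ⟨r, hr⟩ := hn
      omega
    · intro k hk
      simp only [Finset.mem_Icc] at hk ⊢
      obtain ⟨r, hr⟩ := hn
      omega
    · intro k hk
      simp only [Finset.mem_Icc] at hk
      omega
    · intro k hk
      simp only [Finset.mem_Icc] at hk
      omega
    · intro k hk
      simp only [Finset.mem_Icc] at hk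
      rw [hg k (by omega) (by omega)]
  rw [h1, h2, hsplit, Finset.prod_union hdisj, h3, sq]

lemma Wv_flip1 (l m : ℕ) (a b x μ : ℝ) {s : ℕ} (k : ℕ) (h1 : 1 ≤ s) (h2 : s ≤ m) :
    Wv l m a b x μ (m + 1 - s) k = Wv l m a b x μ s k := by
  unfold Wv
  rw [cc_flip h1 h2]
  ring

lemma Wv_flip2 (l m : ℕ) (a b x μ : ℝ) (s : ℕ) {k : ℕ} (h1 : 1 ≤ k) (h2 : k ≤ l) :
    Wv l m a b x μ s (l + 1 - k) = Wv l m a b x μ s k := by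
  unfold Wv
  rw [cc_flip h1 h2]
  ring

lemma prod_full (l m : ℕ) (hl : Even l) (hm : Even m) (a b x μ : ℝ) :
    ∏ sp : Fin m × Fin l, ((Wv l m a b x μ ((sp.1 : ℕ) + 1) ((sp.2 : ℕ) + 1) : ℝ) : ℂ)
      = (∏ s ∈ Finset.Icc 1 (m / 2), ∏ k ∈ Finset.Icc 1 (l / 2),
          ((Wv l m a b x μ s k : ℝ) : ℂ)) ^ 4 := by
  rw [Fintype.prod_prod_type]
  have hinner : ∀ s : ℕ, ∏ p : Fin l, ((Wv l m a b x μ s ((p : ℕ) + 1) : ℝ) : ℂ)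
      = (∏ k ∈ Finset.Icc 1 (l / 2), ((Wv l m a b x μ s k : ℝ) : ℂ)) ^ 2 := by
    intro s
    exact prod_pair l hl (fun k => ((Wv l m a b x μ s k : ℝ) : ℂ))
      (fun k h1 h2 => by rw [Wv_flip2 l m a b x μ s h1 h2])
  calc ∏ s : Fin m, ∏ p : Fin l, ((Wv l m a b x μ ((s : ℕ) + 1) ((p : ℕ) + 1) : ℝ) : ℂ)
      = ∏ s : Fin m, (∏ k ∈ Finset.Icc 1 (l / 2),
          ((Wv l m a b x μ ((s : ℕ) + 1) k : ℝ) : ℂ)) ^ 2 := by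
        exact Finset.prod_congr rfl fun s _ => hinner ((s : ℕ) + 1)
    _ = (∏ s ∈ Finset.Icc 1 (m / 2), (∏ k ∈ Finset.Icc 1 (l / 2),
          ((Wv l m a b x μ s k : ℝ) : ℂ)) ^ 2) ^ 2 := by
        apply prod_pair m hm (fun s => (∏ k ∈ Finset.Icc 1 (l / 2),
          ((Wv l m a b x μ s k : ℝ) : ℂ)) ^ 2)
        intro s h1 h2
        congr 1
        exact Finset.prod_congr rfl fun k _ => by rw [Wv_flip1 l m a b x μ k h1 h2]
    _ = (∏ s ∈ Finset.Icc 1 (m / 2), ∏ k ∈ Finset.Icc 1 (l / 2),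
          ((Wv l m a b x μ s k : ℝ) : ℂ)) ^ 4 := by
        rw [Finset.prod_pow, ← pow_mul]

lemma Mmat_smul (l m : ℕ) (a b x μ : ℝ) :
    Mmat l m a b x μ = (x : ℂ) • 1 + Mmat l m a b 0 μ := by
  unfold Mmat
  have hD : Dmat l a x = (x : ℂ) • 1 + Dmat l a 0 := by
    rw [Dmat_eq, Dmat_eq]
    ext i j
    by_cases h : i = j
    · subst h
      simp [dD, Matrix.diagonal_apply_eq, Matrix.one_apply]
    · simp [Matrix.diagonal_apply_ne _ h, Matrix.one_apply_ne h]
  rw [hD, Matrix.kronecker_add, Matrix.kronecker_smul, Matrix.one_kronecker_one]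
  abel

noncomputable def Q2 (l m : ℕ) (a b μ : ℝ) : Polynomial ℂ :=
  ∏ s ∈ Finset.Icc 1 (m / 2), ∏ k ∈ Finset.Icc 1 (l / 2),
    (Polynomial.X ^ 2
      + Polynomial.C ((4 * a ^ 2 * (cc l k) ^ 2 + 4 * b ^ 2 * (cc m s) ^ 2 + μ ^ 2 : ℝ) : ℂ)) ^ 2

lemma Q2_monic (l m : ℕ) (a b μ : ℝ) : (Q2 l m a b μ).Monic := by
  apply Polynomial.monic_prod_of_monic
  intro s _
  apply Polynomial.monic_prod_of_monic
  intro k _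
  exact (Polynomial.monic_X_pow_add_C ((4 * a ^ 2 * (cc l k) ^ 2 + 4 * b ^ 2 * (cc m s) ^ 2 + μ ^ 2 : ℝ) : ℂ) (two_ne_zero)).pow 2

lemma Q2_eval (l m : ℕ) (a b x μ : ℝ) :
    (Q2 l m a b μ).eval (x : ℂ)
      = ∏ s ∈ Finset.Icc 1 (m / 2), ∏ k ∈ Finset.Icc 1 (l / 2),
          ((Wv l m a b x μ s k : ℝ) : ℂ) ^ 2 := by
  unfold Q2
  rw [Polynomial.eval_prod]
  apply Finset.prod_congr rfl
  intro s _
  rw [Polynomial.eval_prod]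
  apply Finset.prod_congr rfl
  intro k _
  rw [Polynomial.eval_pow, Polynomial.eval_add, Polynomial.eval_pow, Polynomial.eval_X,
    Polynomial.eval_C]
  unfold Wv
  push_cast
  ring

lemma det_eval (l m : ℕ) (a b x μ : ℝ) :
    (Mmat l m a b x μ).det = ((-(Mmat l m a b 0 μ)).charpoly).eval (x : ℂ) := by
  have h1 : ((-(Mmat l m a b 0 μ)).charpoly).eval (x : ℂ)
      = ((Matrix.charmatrix (-(Mmat l m a b 0 μ))).map (Polynomial.evalRingHom (x:ℂ))).det := by
    rw [Matrix.charpoly]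
    exact RingHom.map_det (Polynomial.evalRingHom (x:ℂ)) (Matrix.charmatrix (-(Mmat l m a b 0 μ)))
  rw [h1]
  congr 1
  ext i j
  by_cases h : i = j
  · subst h
    rw [Matrix.map_apply, Matrix.charmatrix_apply_eq]
    simp only [Polynomial.coe_evalRingHom, Polynomial.eval_sub, Polynomial.eval_X,
      Polynomial.eval_C, Matrix.neg_apply]
    rw [Mmat_smul l m a b x μ]
    simp [Matrix.one_apply]
  · rw [Matrix.map_apply, Matrix.charmatrix_apply_ne _ _ _ h]
    simp only [Polynomial.coe_evalRingHom, Polynomial.eval_neg, Polynomial.eval_C,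
      Matrix.neg_apply, neg_neg]
    rw [Mmat_smul l m a b x μ]
    simp [Matrix.one_apply_ne h]

lemma Q2_eval' (l m : ℕ) (a b x μ : ℝ) :
    (Q2 l m a b μ).eval (x : ℂ)
      = (∏ s ∈ Finset.Icc 1 (m / 2), ∏ k ∈ Finset.Icc 1 (l / 2),
          ((Wv l m a b x μ s k : ℝ) : ℂ)) ^ 2 := by
  rw [Q2_eval]
  simp_rw [Finset.prod_pow]

lemma det_eq (l m : ℕ) (hl : Even l) (hm : Even m) (hm0 : 0 < m) (a b x μ : ℝ) :
    (Mmat l m a b x μ).det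
      = ∏ s ∈ Finset.Icc 1 (m / 2), ∏ k ∈ Finset.Icc 1 (l / 2),
          ((Wv l m a b x μ s k : ℝ) : ℂ) ^ 2 := by
  set Q1 : Polynomial ℂ := (-(Mmat l m a b 0 μ)).charpoly with hQ1
  have hQ1monic : Q1.Monic := Matrix.charpoly_monic _
  have hroot : ∀ y : ℝ, (Q1 ^ 2 - Q2 l m a b μ ^ 2).eval ((y : ℝ) : ℂ) = 0 := by
    intro y
    rw [Polynomial.eval_sub, Polynomial.eval_pow, Polynomial.eval_pow]
    rw [← det_eval l m a b y μ, Q2_eval' l m a b y μ]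
    rw [det_sq l m hl hm hm0 a b y μ, prod_full l m hl hm a b y μ]
    ring
  have hzero : Q1 ^ 2 - Q2 l m a b μ ^ 2 = 0 := by
    apply Polynomial.eq_zero_of_infinite_isRoot
    apply Set.Infinite.mono (s := Set.range (fun y : ℝ => (y : ℂ)))
    · rintro z ⟨y, rfl⟩
      exact hroot y
    · exact Set.infinite_range_of_injective Complex.ofReal_injective
  have hfac : (Q1 - Q2 l m a b μ) * (Q1 + Q2 l m a b μ) = 0 := by linear_combination hzero
  have hQ1Q2 : Q1 = Q2 l m a b μ := by
    rcases mul_eq_zero.mp hfac with h | h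
    · exact sub_eq_zero.mp h
    · exfalso
      have h2 : Q1 = -(Q2 l m a b μ) := eq_neg_of_add_eq_zero_left h
      have h3 : (1 : ℂ) = -1 := by
        calc (1 : ℂ) = Q1.leadingCoeff := hQ1monic.symm
          _ = (-(Q2 l m a b μ)).leadingCoeff := by rw [h2]
          _ = -(Q2 l m a b μ).leadingCoeff := Polynomial.leadingCoeff_neg _
          _ = -1 := by rw [(Q2_monic l m a b μ)]
      norm_num at h3
  rw [det_eval l m a b x μ, ← hQ1, hQ1Q2, Q2_eval]

end DetBlockAux

/-- The determinant of the block `F_j = I_m ⊗ D + B ⊗ J'` arising in the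
block-diagonalization of the generalised adjacency matrix of the three-dimensional grid:
`det(I_m ⊗ D + B ⊗ J') = ∏_{s=1}^{m/2} ∏_{k=1}^{ℓ/2}
(x² + 4a² cos²(kπ/(ℓ+1)) + 4b² cos²(sπ/(m+1)) + μ²)²`. -/
theorem det_block (l m : ℕ) (hl : Even l) (hl0 : 0 < l) (hm : Even m) (hm0 : 0 < m)
    (a b x μ : ℝ) :
    ((1 : Matrix (Fin m) (Fin m) ℂ) ⊗ₖ Dmat l a x + Bmat m b μ ⊗ₖ Jprime l).det =
      ∏ s ∈ Finset.Icc 1 (m / 2), ∏ k ∈ Finset.Icc 1 (l / 2),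
        (((x ^ 2 + 4 * a ^ 2 * Real.cos ((k : ℝ) * Real.pi / ((l : ℝ) + 1)) ^ 2
          + 4 * b ^ 2 * Real.cos ((s : ℝ) * Real.pi / ((m : ℝ) + 1)) ^ 2
          + μ ^ 2 : ℝ) : ℂ)) ^ 2 := by
  exact DetBlockAux.det_eq l m hl hm hm0 a b x μ
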